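/- For all natural numbers i, j₁, j₂ and real k₁, k₂, b_{i,j₁+j₂,k₁+k₂} = Σ_{r=0}^{i} C(i,r) · b_{r,j₁,k₁} · b_{i-r,j₂,k₂} (convolution identity for moment generating Stirling numbers). -/

import Mathlib

open Finset

noncomputable def msn (i j : ℕ) (k : ℝ) : ℝ :=
  ∑ r ∈ Finset.range (j + 1), (j.choose r : ℝ) * (-1 : ℝ) ^ (j - r) * ((r : ℝ) + k) ^ i

theorem stmt (i j₁ j₂ : ℕ) (k₁ k₂ : ℝ) : msn i (j₁ + j₂) (k₁ + k₂) = ∑ r ∈ Finset.range (i + 1), (i.choose r : ℝ) * msn r j₁ k₁ * msn (i - r) j₂ k₂ := by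
  set N := j₁ + j₂ with hN
  set g : ℕ × ℕ → ℝ := fun p =>
    (j₁.choose p.1 : ℝ) * (j₂.choose p.2 : ℝ) * (-1 : ℝ) ^ (N - (p.1 + p.2)) *
      ((p.1 : ℝ) + (p.2 : ℝ) + (k₁ + k₂)) ^ i with hg
  have hL : msn i N (k₁ + k₂) = ∑ p ∈ Finset.range (j₁+1) ×ˢ Finset.range (j₂+1), g p := by
    have h1 : msn i N (k₁ + k₂)
        = ∑ u ∈ Finset.range (N+1), ∑ p ∈ Finset.HasAntidiagonal.antidiagonal u, g p := by
      unfold msn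
      refine Finset.sum_congr rfl fun u hu => ?_
      have := Nat.add_choose_eq j₁ j₂ u
      rw [← hN] at this
      rw [this]
      push_cast
      rw [Finset.sum_mul, Finset.sum_mul]
      refine Finset.sum_congr rfl fun p hp => ?_
      have hpu : p.1 + p.2 = u := Finset.HasAntidiagonal.mem_antidiagonal.mp hp
      subst hpu
      simp only [hg]
      push_cast
      ring
    rw [h1, ← Finset.sum_biUnion]
    · refine (Finset.sum_subset ?_ ?_).symm
      · rintro ⟨s, t⟩ hp
        simp only [Finset.mem_product, Finset.mem_range] at hp
        refine Finset.mem_biUnion.mpr ⟨s + t, Finset.mem_range.mpr ?_, Finset.HasAntidiagonal.mem_antidiagonal.mpr rfl⟩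
        omega
      · rintro ⟨s, t⟩ hp hnp
        simp only [Finset.mem_product, Finset.mem_range, not_and_or, not_lt] at hnp
        rcases hnp with h | h
        · simp [hg, Nat.choose_eq_zero_of_lt (by omega : j₁ < s)]
        · simp [hg, Nat.choose_eq_zero_of_lt (by omega : j₂ < t)]
    · intro a _ b _ hab
      simp only [Finset.disjoint_left]
      intro p hpa hpb
      exact hab ((Finset.HasAntidiagonal.mem_antidiagonal.mp hpa) ▸ (Finset.HasAntidiagonal.mem_antidiagonal.mp hpb) ▸ rfl)
  rw [hL, Finset.sum_product]
  have hr : ∀ r, (i.choose r : ℝ) * msn r j₁ k₁ * msn (i - r) j₂ k₂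
      = ∑ s ∈ Finset.range (j₁+1), ∑ t ∈ Finset.range (j₂+1),
        (i.choose r : ℝ) * ((j₁.choose s : ℝ) * (-1:ℝ)^(j₁-s) * ((s:ℝ)+k₁)^r)
          * ((j₂.choose t : ℝ) * (-1:ℝ)^(j₂-t) * ((t:ℝ)+k₂)^(i-r)) := by
    intro r
    simp only [msn, Finset.mul_sum, Finset.sum_mul]
    rw [Finset.sum_comm]
  simp only [hr]
  conv_rhs => rw [Finset.sum_comm]
  refine Finset.sum_congr rfl fun s hs => ?_
  conv_rhs => rw [Finset.sum_comm]
  refine Finset.sum_congr rfl fun t ht => ?_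
  simp only [Finset.mem_range] at hs ht
  simp only [hg]
  have h1 : (-1:ℝ)^(N-(s+t)) = (-1:ℝ)^(j₁-s) * (-1:ℝ)^(j₂-t) := by
    rw [← pow_add]; congr 1; omega
  have h2 : ((s:ℝ) + (t:ℝ) + (k₁+k₂)) = ((s:ℝ)+k₁) + ((t:ℝ)+k₂) := by ring
  rw [h1, h2, add_pow, Finset.mul_sum]
  refine Finset.sum_congr rfl fun r _ => by ring
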